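/- For any positive integers n, n' with n' ≥ 2 and any binary word y ∈ Z_2^{n'}: f_n(y) - f_n(y_{[1,n'-1]}) equals -1/2 if y_{n'-1} = y_{n'}, and equals n - 1/2 - t(y_{[1,n'-1]}) if y_{n'-1} ≠ y_{n'}. -/
import Mathlib


open Finset

/-- The (0-indexed, inclusive) segment `x_i,…,x_j` is alternating, i.e. of the
form `abab…` : adjacent symbols differ and the segment has period 2. -/
def IsAltOn {m : ℕ} (x : ℕ → Fin m) (i j : ℕ) : Prop :=
  (∀ k ∈ Finset.Ico i j, x k ≠ x (k + 1)) ∧ ∀ k ∈ Finset.Ico i (j - 1), x k = x (k + 2)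

instance {m : ℕ} (x : ℕ → Fin m) (i j : ℕ) : Decidable (IsAltOn x i j) :=
  inferInstanceAs (Decidable (_ ∧ _))

/-- The set of (0-indexed, inclusive) index pairs of maximal alternating segments
of the word `x_0,…,x_{n-1}`. -/
def altSegs {m : ℕ} (n : ℕ) (x : ℕ → Fin m) : Finset (ℕ × ℕ) :=
  (Finset.range n ×ˢ Finset.range n).filter (fun p => p.1 ≤ p.2 ∧ IsAltOn x p.1 p.2 ∧
    (p.1 = 0 ∨ ¬ IsAltOn x (p.1 - 1) p.2) ∧ (p.2 = n - 1 ∨ ¬ IsAltOn x p.1 (p.2 + 1)))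

/-- `a(x)` : the number of maximal alternating segments of `x_0,…,x_{n-1}`. -/
def aCount {m : ℕ} (n : ℕ) (x : ℕ → Fin m) : ℕ := (altSegs n x).card

/-- `∑ s_i` : the sum of the lengths of the maximal alternating segments. -/
def sumLen {m : ℕ} (n : ℕ) (x : ℕ → Fin m) : ℕ := ∑ p ∈ altSegs n x, (p.2 - p.1 + 1)

/-- `∑ s_i²` : the sum of the squares of the lengths of the maximal alternating segments. -/
def sumLenSq {m : ℕ} (n : ℕ) (x : ℕ → Fin m) : ℕ := ∑ p ∈ altSegs n x, (p.2 - p.1 + 1) ^ 2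

/-- `ρ(x)` : the number of runs of the word `x_0,…,x_{n-1}`. -/
def rho {m : ℕ} (n : ℕ) (x : ℕ → Fin m) : ℕ :=
  1 + ((Finset.range (n - 1)).filter (fun i => x i ≠ x (i + 1))).card

/-- `h(x)` : the length of the first maximal alternating segment of `x_0,…,x_{n-1}`. -/
def headAlt {m : ℕ} (n : ℕ) (x : ℕ → Fin m) : ℕ :=
  ((Finset.range n).filter (fun j => IsAltOn x 0 j)).card

/-- `t(x)` : the length of the last maximal alternating segment of `x_0,…,x_{n-1}`. -/
def tailAlt {m : ℕ} (n : ℕ) (x : ℕ → Fin m) : ℕ :=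
  ((Finset.range n).filter (fun j => IsAltOn x (n - 1 - j) (n - 1))).card

/-- Extend a word of length `n` to a function `ℕ → Fin m` (junk value `0` beyond `n`). -/
def extWord {m : ℕ} (n : ℕ) (hm : 0 < m) (y : Fin n → Fin m) : ℕ → Fin m :=
  fun i => if h : i < n then y ⟨i, h⟩ else ⟨0, hm⟩

/-- The FLL ball of radius 1 around `x` : all words `y` of length `n` sharing with `x`
a common subsequence of length `n - 1` (equivalently, `d_l(x,y) ≤ 1`). -/
def L1ball {m : ℕ} (n : ℕ) (x : Fin n → Fin m) : Set (Fin n → Fin m) :=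
  {y | ∃ z : List (Fin m), z.length = n - 1 ∧ z.Sublist (List.ofFn x) ∧ z.Sublist (List.ofFn y)}

/-- `|L_1(x)|` : the size of the FLL ball of radius 1 around `x`. -/
noncomputable def L1size {m : ℕ} (n : ℕ) (x : Fin n → Fin m) : ℕ := (L1ball n x).ncard

/-- `f_n(y)` for binary words `y` of length `len` : `ρ(y)·n - (1/2)∑ s_j²`. -/
noncomputable def fB (n len : ℕ) (y : ℕ → Fin 2) : ℝ :=
  (rho len y : ℝ) * n - (sumLenSq len y : ℝ) / 2

/-- `f_{m,n}(y)` for words `y` of length `len` over `Z_m` :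
`ρ(y)(mn-n-1) - (1/2)∑ s_j² + (3/2)∑ s_j - a(y)`. -/
noncomputable def fM (m n len : ℕ) (y : ℕ → Fin m) : ℝ :=
  (rho len y : ℝ) * ((m : ℝ) * n - n - 1) - (sumLenSq len y : ℝ) / 2
    + 3 / 2 * (sumLen len y : ℝ) - (aCount len y : ℝ)

lemma fin2_trans {a b c : Fin 2} (h1 : a ≠ b) (h2 : b ≠ c) : a = c := by
  fin_cases a <;> fin_cases b <;> fin_cases c <;> simp_all

lemma alt_iff (x : ℕ → Fin 2) (i j : ℕ) :
    IsAltOn x i j ↔ ∀ k ∈ Finset.Ico i j, x k ≠ x (k + 1) := by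
  constructor
  · exact fun h => h.1
  · intro h
    refine ⟨h, fun k hk => ?_⟩
    simp only [Finset.mem_Ico] at hk
    exact fin2_trans (h k (by simp [Finset.mem_Ico]; omega))
      (h (k+1) (by simp [Finset.mem_Ico]; omega))

lemma alt_trivial (x : ℕ → Fin 2) {i j : ℕ} (h : j ≤ i) : IsAltOn x i j := by
  constructor <;> intro k hk <;> simp only [Finset.mem_Ico] at hk <;> omega

lemma alt_mono (x : ℕ → Fin 2) {i i' j : ℕ} (h : i ≤ i') (ha : IsAltOn x i j) :
    IsAltOn x i' j := by
  rw [alt_iff] at ha ⊢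
  intro k hk
  simp only [Finset.mem_Ico] at hk
  exact ha k (by simp [Finset.mem_Ico]; omega)

lemma alt_succ_iff (x : ℕ → Fin 2) (i len : ℕ) (hlen : 1 ≤ len) :
    IsAltOn x i len ↔ IsAltOn x i (len-1) ∧ (i ≤ len-1 → x (len-1) ≠ x len) := by
  have e : len - 1 + 1 = len := by omega
  rw [alt_iff, alt_iff]
  simp only [Finset.mem_Ico]
  constructor
  · intro h
    refine ⟨fun k hk => h k ⟨hk.1, by omega⟩, fun hi => ?_⟩
    have := h (len-1) ⟨hi, by omega⟩
    rwa [e] at this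
  · rintro ⟨h1, h2⟩ k hk
    rcases lt_or_ge k (len-1) with hk' | hk'
    · exact h1 k ⟨hk.1, hk'⟩
    · have hke : k = len - 1 := by omega
      subst hke
      rw [e]
      exact h2 hk.1

lemma mem_altSegs {L : ℕ} {x : ℕ → Fin 2} {p : ℕ × ℕ} :
    p ∈ altSegs L x ↔ p.1 < L ∧ p.2 < L ∧ p.1 ≤ p.2 ∧ IsAltOn x p.1 p.2 ∧
      (p.1 = 0 ∨ ¬ IsAltOn x (p.1 - 1) p.2) ∧ (p.2 = L - 1 ∨ ¬ IsAltOn x p.1 (p.2 + 1)) := by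
  simp only [altSegs, Finset.mem_filter, Finset.mem_product, Finset.mem_range]
  tauto

lemma dc_range (s : Finset ℕ) (h : ∀ j k, j ≤ k → k ∈ s → j ∈ s) :
    s = Finset.range s.card := by
  rcases s.eq_empty_or_nonempty with rfl | hne
  · simp
  · have hM := s.max'_mem hne
    have hs : s = Finset.range (s.max' hne + 1) := by
      ext k
      simp only [Finset.mem_range]
      constructor
      · intro hk; have := Finset.le_max' s k hk; omega
      · intro hk; exact h k _ (by omega) hM
    have hc : s.card = s.max' hne + 1 := by conv_lhs => rw [hs]; simp
    rw [hc]
    exact hs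

lemma tail_filter (len : ℕ) (x : ℕ → Fin 2) :
    (Finset.range len).filter (fun j => IsAltOn x (len - 1 - j) (len - 1))
      = Finset.range (tailAlt len x) := by
  rw [tailAlt]
  apply dc_range
  intro j k hjk hk
  simp only [Finset.mem_filter, Finset.mem_range] at hk ⊢
  exact ⟨by omega, alt_mono x (by omega) hk.2⟩

lemma tailAlt_pos (len : ℕ) (hlen : 1 ≤ len) (x : ℕ → Fin 2) : 1 ≤ tailAlt len x := by
  have : (len - 1 - (len-1) : ℕ) = 0 := by omega
  have h0 : 0 ∈ (Finset.range len).filter (fun j => IsAltOn x (len - 1 - j) (len - 1)) := by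
    simp only [Finset.mem_filter, Finset.mem_range, Nat.sub_zero]
    exact ⟨by omega, alt_trivial x (le_refl _)⟩
  have := Finset.card_pos.2 ⟨0, h0⟩
  rw [tailAlt]; omega

lemma tailAlt_le (len : ℕ) (x : ℕ → Fin 2) : tailAlt len x ≤ len := by
  rw [tailAlt]
  exact le_trans (Finset.card_filter_le _ _) (by simp)

lemma alt_tail_iff (len : ℕ) (hlen : 1 ≤ len) (x : ℕ → Fin 2) (k : ℕ) :
    IsAltOn x k (len - 1) ↔ len - 1 - k < tailAlt len x := by
  have ht1 := tailAlt_pos len hlen x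
  constructor
  · intro h
    have hj : (len - 1 - k) ∈ (Finset.range len).filter
        (fun j => IsAltOn x (len - 1 - j) (len - 1)) := by
      simp only [Finset.mem_filter, Finset.mem_range]
      refine ⟨by omega, ?_⟩
      rcases le_or_gt k (len - 1) with hk | hk
      · have : len - 1 - (len - 1 - k) = k := by omega
        rwa [this]
      · have : len - 1 - (len - 1 - k) = len - 1 := by omega
        rw [this]
        exact alt_trivial x (le_refl _)
    rw [tail_filter] at hj
    simpa using hj
  · intro h
    have hj : (len - 1 - k) ∈ Finset.range (tailAlt len x) := by simpa using h
    rw [← tail_filter] at hj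
    simp only [Finset.mem_filter, Finset.mem_range] at hj
    rcases le_or_gt k (len - 1) with hk | hk
    · have e : len - 1 - (len - 1 - k) = k := by omega
      rw [e] at hj
      exact hj.2
    · exact alt_trivial x (by omega)

lemma i_eq (len : ℕ) (hlen : 1 ≤ len) (x : ℕ → Fin 2) (i : ℕ)
    (h1 : IsAltOn x i (len - 1)) (h2 : i = 0 ∨ ¬ IsAltOn x (i - 1) (len - 1)) :
    i = len - tailAlt len x := by
  have ht1 := tailAlt_pos len hlen x
  have ht2 := tailAlt_le len x
  rw [alt_tail_iff len hlen] at h1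
  rcases h2 with rfl | h2
  · omega
  · rw [alt_tail_iff len hlen] at h2
    push_neg at h2
    rcases Nat.eq_zero_or_pos i with rfl | hi
    · omega
    · omega
lemma alt_break (x : ℕ → Fin 2) (len : ℕ) (hlen : 1 ≤ len) (hx : x (len-1) = x len)
    {i : ℕ} (hi : i ≤ len - 1) : ¬ IsAltOn x i len := by
  intro hc
  exact ((alt_succ_iff x i len hlen).1 hc).2 hi hx

lemma alt_ext (x : ℕ → Fin 2) (len : ℕ) (hlen : 1 ≤ len) (hx : x (len-1) ≠ x len)
    (i : ℕ) : IsAltOn x i len ↔ IsAltOn x i (len-1) := by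
  rw [alt_succ_iff x i len hlen]
  simp only [and_iff_left_iff_imp]
  exact fun _ _ => hx

lemma altSegs_succ_eq (x : ℕ → Fin 2) (len : ℕ) (hlen : 1 ≤ len)
    (hx : x (len-1) = x len) :
    altSegs (len+1) x = insert (len, len) (altSegs len x) := by
  ext ⟨i, j⟩
  simp only [mem_altSegs, Finset.mem_insert, Prod.mk.injEq]
  constructor
  · rintro ⟨hi, hj, hij, halt, hleft, hright⟩
    rcases Nat.lt_or_ge j len with hjl | hjl
    · right
      refine ⟨by omega, hjl, hij, halt, hleft, ?_⟩
      rcases hright with h | h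
      · omega
      · exact Or.inr h
    · have hj' : len = j := by omega
      subst hj'
      refine Or.inl ⟨?_, rfl⟩
      by_contra hi'
      exact alt_break x len hlen hx (by omega) halt
  · rintro (⟨hi0, hj0⟩ | ⟨hi, hj, hij, halt, hleft, hright⟩)
    · rw [hi0, hj0]
      refine ⟨by omega, by omega, le_refl _, alt_trivial x (le_refl _),
        Or.inr (alt_break x len hlen hx (le_refl _)), Or.inl (by omega)⟩
    · refine ⟨by omega, by omega, hij, halt, hleft, Or.inr ?_⟩
      rcases hright with h | h
      · have e : j + 1 = len := by omega
        rw [e]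
        exact alt_break x len hlen hx (by omega)
      · exact h

lemma altSegs_succ_ne (x : ℕ → Fin 2) (len : ℕ) (hlen : 1 ≤ len)
    (hx : x (len-1) ≠ x len) :
    altSegs (len+1) x
      = insert (len - tailAlt len x, len)
          ((altSegs len x).erase (len - tailAlt len x, len - 1)) := by
  have ht1 := tailAlt_pos len hlen x
  have ht2 := tailAlt_le len x
  set t := tailAlt len x with htdef
  have key : ∀ k, IsAltOn x k (len - 1) ↔ len - 1 - k < t := alt_tail_iff len hlen x
  have hext := alt_ext x len hlen hx
  ext ⟨i, j⟩
  simp only [mem_altSegs, Finset.mem_insert, Finset.mem_erase, Prod.mk.injEq]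
  constructor
  · rintro ⟨hi, hj, hij, halt, hleft, hright⟩
    rcases Nat.lt_or_ge j len with hjl | hjl
    · -- j < len : goes to the erase part
      right
      have hr' : ¬ IsAltOn x i (j + 1) := by
        rcases hright with h | h
        · omega
        · exact h
      constructor
      · rintro ⟨rfl, rfl⟩
        exact hr' (by rw [show len - 1 + 1 = len from by omega, hext]
                      exact (key _).2 (by omega))
      · exact ⟨by omega, hjl, hij, halt, hleft, Or.inr hr'⟩
    · have hj' : len = j := by omega
      subst hj'
      left
      -- show i = len - t
      have hil : i ≤ len - 1 := by
        rcases Nat.lt_or_ge i len with h | h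
        · omega
        · have hi' : i = len := by omega
          rw [hi'] at hleft
          rcases hleft with h0 | h0
          · omega
          · exact absurd ((hext (len-1)).2 ((key _).2 (by omega))) h0
      rw [hext] at halt
      have hleft' : i = 0 ∨ ¬ IsAltOn x (i - 1) (len - 1) := by
        rcases hleft with h0 | h0
        · exact Or.inl h0
        · exact Or.inr (fun hc => h0 ((hext _).2 hc))
      exact ⟨i_eq len hlen x i halt hleft', rfl⟩
  · rintro (⟨hi0, hj0⟩ | ⟨hne, hi, hj, hij, halt, hleft, hright⟩)
    · rw [hi0, hj0]
      refine ⟨by omega, by omega, by omega, (hext _).2 ((key _).2 (by omega)), ?_,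
        Or.inl (by omega)⟩
      rcases Nat.eq_zero_or_pos (len - t) with h0 | h0
      · exact Or.inl h0
      · refine Or.inr (fun hc => ?_)
        rw [hext] at hc
        rw [key] at hc
        omega
    · refine ⟨by omega, by omega, hij, halt, hleft, Or.inr ?_⟩
      rcases hright with h | h
      · -- j = len - 1, but then i = len - t, contradicting hne
        exfalso
        rw [h] at halt hleft
        exact hne (by rw [show i = len - t from i_eq len hlen x i halt hleft, h])
      · exact h
lemma rho_succ (x : ℕ → Fin 2) (len : ℕ) (hlen : 1 ≤ len) :
    rho (len+1) x = rho len x + (if x (len-1) = x len then 0 else 1) := by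
  unfold rho
  have e : len - 1 + 1 = len := by omega
  have hr : Finset.range (len + 1 - 1) = insert (len-1) (Finset.range (len-1)) := by
    rw [← Finset.range_add_one]
    congr 1
    omega
  rw [hr, Finset.filter_insert]
  by_cases h : x (len-1) = x len
  · rw [if_neg (by rw [e]; simp [h]), if_pos h]
    omega
  · rw [if_pos (by rw [e]; exact h), if_neg h,
      Finset.card_insert_of_notMem (fun hc => by
        have := Finset.mem_of_mem_filter _ hc
        simp at this)]
    omega

lemma notmem_len {x : ℕ → Fin 2} {len i : ℕ} : (i, len) ∉ altSegs len x := by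
  intro hc
  have := mem_altSegs.1 hc
  omega

lemma sumLenSq_succ_eq (x : ℕ → Fin 2) (len : ℕ) (hlen : 1 ≤ len)
    (hx : x (len-1) = x len) :
    sumLenSq (len+1) x = sumLenSq len x + 1 := by
  unfold sumLenSq
  rw [altSegs_succ_eq x len hlen hx, Finset.sum_insert notmem_len]
  simp [add_comm]

lemma last_mem (x : ℕ → Fin 2) (len : ℕ) (hlen : 1 ≤ len) :
    (len - tailAlt len x, len - 1) ∈ altSegs len x := by
  have ht1 := tailAlt_pos len hlen x
  have ht2 := tailAlt_le len x
  have key := alt_tail_iff len hlen x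
  refine mem_altSegs.2 ⟨by omega, by omega, by omega, (key _).2 (by omega), ?_,
    Or.inl rfl⟩
  rcases Nat.eq_zero_or_pos (len - tailAlt len x) with h0 | h0
  · exact Or.inl h0
  · refine Or.inr (fun hc => ?_)
    rw [key] at hc
    omega

lemma sumLenSq_succ_ne (x : ℕ → Fin 2) (len : ℕ) (hlen : 1 ≤ len)
    (hx : x (len-1) ≠ x len) :
    sumLenSq (len+1) x + (tailAlt len x)^2
      = sumLenSq len x + (tailAlt len x + 1)^2 := by
  have ht1 := tailAlt_pos len hlen x
  have ht2 := tailAlt_le len x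
  unfold sumLenSq
  rw [altSegs_succ_ne x len hlen hx,
    Finset.sum_insert (fun hc => notmem_len (Finset.mem_of_mem_erase hc))]
  rw [← Finset.add_sum_erase _ _ (last_mem x len hlen)]
  have e1 : len - (len - tailAlt len x) + 1 = tailAlt len x + 1 := by omega
  have e2 : len - 1 - (len - tailAlt len x) + 1 = tailAlt len x := by omega
  rw [e1, e2]
  ring

lemma main_diff (n len : ℕ) (hlen : 1 ≤ len) (x : ℕ → Fin 2) :
    (x (len-1) = x len → fB n (len+1) x - fB n len x = -(1/2)) ∧
    (x (len-1) ≠ x len →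
      fB n (len+1) x - fB n len x = (n : ℝ) - 1/2 - (tailAlt len x : ℝ)) := by
  constructor
  · intro hx
    unfold fB
    rw [rho_succ x len hlen, if_pos hx, sumLenSq_succ_eq x len hlen hx]
    push_cast
    ring
  · intro hx
    unfold fB
    rw [rho_succ x len hlen, if_neg hx]
    have hs := sumLenSq_succ_ne x len hlen hx
    have hs' : (sumLenSq (len+1) x : ℝ)
        = (sumLenSq len x : ℝ) + 2 * (tailAlt len x : ℝ) + 1 := by
      have := congrArg (fun k : ℕ => (k : ℝ)) hs
      push_cast at this
      nlinarith [this]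
    rw [hs']
    push_cast
    ring
/-- Last-symbol difference formula for `f_n` on binary words: for `y ∈ Z_2^{n'}` with
`n' ≥ 2`, `f_n(y) - f_n(y_{[1,n'-1]})` equals `-1/2` if `y_{n'-1} = y_{n'}` and equals
`n - 1/2 - t(y_{[1,n'-1]})` otherwise. -/
theorem stmt10 (n n' : ℕ) (hn : 1 ≤ n) (hn' : 2 ≤ n') (y : Fin n' → Fin 2) :
    (extWord n' (by omega) y (n' - 2) = extWord n' (by omega) y (n' - 1) →
      fB n n' (extWord n' (by omega) y) - fB n (n' - 1) (extWord n' (by omega) y) = -(1 / 2))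
    ∧ (extWord n' (by omega) y (n' - 2) ≠ extWord n' (by omega) y (n' - 1) →
      fB n n' (extWord n' (by omega) y) - fB n (n' - 1) (extWord n' (by omega) y)
        = (n : ℝ) - 1 / 2 - (tailAlt (n' - 1) (extWord n' (by omega) y) : ℝ)) := by
  have h := main_diff n (n' - 1) (by omega) (extWord n' (by omega) y)
  have e1 : n' - 1 - 1 = n' - 2 := by omega
  have e2 : n' - 1 + 1 = n' := by omega
  rw [e1, e2] at h
  exact h
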